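/- Let k ≥ 2 be an integer and ε' ∈ (0, 1) a real number. Define the probability distributions p₁ := ((1−ε')/(3(k−1)), …, (1−ε')/(3(k−1)), (2+ε')/3) and p₂ := (1/(3(k−1)), …, 1/(3(k−1)), 2/3) on k symbols, where the first k−1 coordinates are equal. Then their Shannon entropies satisfy H(p₂) − H(p₁) ≥ (ε'/3) · log(2(k−1)/e). -/

import Mathlib

open scoped BigOperators

/-- The Shannon entropy `H(q) = Σ_i q_i log(1/q_i)` of a distribution `q` on `Fin k`
(note that in Mathlib `Real.log (1/0) = 0`, matching the convention `0 · log(1/0) = 0`). -/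
noncomputable def shannonEntropy {k : ℕ} (q : Fin k → ℝ) : ℝ :=
  ∑ i, q i * Real.log (1 / q i)

/-- For `k ≥ 2` and `ε' ∈ (0,1)`, with
`p₁ = ((1-ε')/(3(k-1)), …, (1-ε')/(3(k-1)), (2+ε')/3)` and
`p₂ = (1/(3(k-1)), …, 1/(3(k-1)), 2/3)`,
the entropy difference satisfies `H(p₂) - H(p₁) ≥ (ε'/3) log(2(k-1)/e)`. -/
theorem entropy_gap (k : ℕ) (hk : 2 ≤ k) (ε' : ℝ) (hε0 : 0 < ε') (hε1 : ε' < 1) :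
    shannonEntropy (fun i : Fin k =>
        if (i : ℕ) < k - 1 then 1 / (3 * ((k : ℝ) - 1)) else 2 / 3)
      - shannonEntropy (fun i : Fin k =>
        if (i : ℕ) < k - 1 then (1 - ε') / (3 * ((k : ℝ) - 1)) else (2 + ε') / 3)
      ≥ (ε' / 3) * Real.log (2 * ((k : ℝ) - 1) / Real.exp 1) := by
  obtain ⟨m, rfl⟩ : ∃ m, k = m + 1 := ⟨k - 1, by omega⟩
  have hm : 1 ≤ m := by omega
  have hm' : (1:ℝ) ≤ (m:ℝ) := by exact_mod_cast hm
  have ha : (0:ℝ) < (m:ℝ) := by linarith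
  have hcast : ((m+1 : ℕ) : ℝ) - 1 = (m:ℝ) := by push_cast; ring
  simp only [shannonEntropy, Fin.sum_univ_castSucc, Fin.coe_castSucc, Fin.val_last,
    Nat.add_sub_cancel, Fin.is_lt, if_true, lt_irrefl, if_false, hcast,
    Finset.sum_const, Finset.card_univ, Fintype.card_fin, nsmul_eq_mul]
  have h3a : (0:ℝ) < 3 * (m:ℝ) := by linarith
  have h1e : (0:ℝ) < 1 - ε' := by linarith
  have h2e : (0:ℝ) < 2 + ε' := by linarith
  have l1 : Real.log (1 / (1 / (3 * (m:ℝ)))) = Real.log 3 + Real.log (m:ℝ) := by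
    rw [one_div_one_div, Real.log_mul (by norm_num) (ne_of_gt ha)]
  have l2 : Real.log (1 / ((1 - ε') / (3 * (m:ℝ)))) =
      Real.log 3 + Real.log (m:ℝ) - Real.log (1 - ε') := by
    rw [one_div, Real.log_inv, Real.log_div (ne_of_gt h1e) (ne_of_gt h3a),
      Real.log_mul (by norm_num) (ne_of_gt ha)]; ring
  have l3 : Real.log (1 / ((2:ℝ) / 3)) = Real.log 3 - Real.log 2 := by
    rw [one_div, Real.log_inv, Real.log_div (by norm_num) (by norm_num)]; ring
  have l4 : Real.log (1 / ((2 + ε') / 3)) = Real.log 3 - Real.log (2 + ε') := by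
    rw [one_div, Real.log_inv, Real.log_div (ne_of_gt h2e) (by norm_num)]; ring
  have l5 : Real.log (2 * (m:ℝ) / Real.exp 1) = Real.log 2 + Real.log (m:ℝ) - 1 := by
    rw [Real.log_div (by positivity) (Real.exp_ne_zero 1),
      Real.log_mul (by norm_num) (ne_of_gt ha), Real.log_exp]
  rw [l1, l2, l3, l4, l5]
  -- key inequalities
  have k1 : (1 - ε') * Real.log (1 - ε') ≥ -ε' := by
    have := Real.log_le_sub_one_of_pos (show (0:ℝ) < 1/(1-ε') by positivity)
    rw [Real.log_div one_ne_zero (ne_of_gt h1e), Real.log_one] at this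
    have h : -Real.log (1 - ε') ≤ 1/(1-ε') - 1 := by linarith
    have h2 : (1 - ε') * (-Real.log (1 - ε')) ≤ (1 - ε') * (1/(1-ε') - 1) :=
      mul_le_mul_of_nonneg_left h (le_of_lt h1e)
    have h3 : (1 - ε') * (1/(1-ε') - 1) = ε' := by field_simp; ring
    nlinarith
  have k2 : Real.log 2 ≤ Real.log (2 + ε') := Real.log_le_log (by norm_num) (by linarith)
  have hme : (m:ℝ) ≠ 0 := ne_of_gt ha
  have em : (m:ℝ) * (1 / (3 * (m:ℝ)) * (Real.log 3 + Real.log (m:ℝ)))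
      = (Real.log 3 + Real.log (m:ℝ)) / 3 := by field_simp
  have em2 : (m:ℝ) * ((1 - ε') / (3 * (m:ℝ)) *
        (Real.log 3 + Real.log (m:ℝ) - Real.log (1 - ε')))
      = (1 - ε') * (Real.log 3 + Real.log (m:ℝ) - Real.log (1 - ε')) / 3 := by
    field_simp
  rw [em, em2]
  nlinarith [k1, mul_le_mul_of_nonneg_left k2 (le_of_lt h2e)]
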